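/- arXiv:2602.15311 — 2 statements merged into one kernel-verified Lean document; each statement's English description precedes it below -/
import Mathlib

section
/- For every string T = T[1..n] and every i ∈ [1..n]: if X_i ≠ ∅ then LRS[i] = i − min(X_i) + 1 = |X_i|, and if X_i = ∅ then LRS[i] = 0. In particular LRS[i] = |X_i| for all i. -/
variable {α : Type*}

/-- `occursAt T S p`: the string `S` occurs at the 1-based position `p` in `T`,
i.e. `1 ≤ p ≤ |T| − |S| + 1` and `T[p..p+|S|−1] = S`. -/
def occursAt (T S : List α) (p : ℕ) : Prop :=
  1 ≤ p ∧ p + S.length ≤ T.length + 1 ∧ (T.drop (p - 1)).take S.length = S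

/-- `#occ_T(S)`: the number of positions at which `S` occurs in `T`. -/
noncomputable def occCount (T S : List α) : ℕ :=
  {p : ℕ | occursAt T S p}.ncard

/-- `sub T i ℓ = T[i..i+ℓ−1]` (1-based substring of length `ℓ` starting at `i`). -/
def sub (T : List α) (i ℓ : ℕ) : List α := (T.drop (i - 1)).take ℓ

/-- Longest previous factor array (1-based): `LPF T i` is the largest `ℓ ≥ 0` such that
the prefix `T[i..i+ℓ−1]` of `T[i..n]` also occurs at some position `j < i` in `T`. -/
noncomputable def LPF (T : List α) (i : ℕ) : ℕ :=
  @Nat.findGreatest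
    (fun ℓ => (i - 1) + ℓ ≤ T.length ∧ ∃ j, 1 ≤ j ∧ j < i ∧ occursAt T (sub T i ℓ) j)
    (Classical.decPred _) T.length

/-- Longest repeating suffix array (1-based): `LRS T i` is the length of the longest
suffix of `T[1..i]` occurring at least twice in `T[1..i]`. -/
noncomputable def LRS (T : List α) (i : ℕ) : ℕ :=
  @Nat.findGreatest
    (fun ℓ => 2 ≤ occCount (T.take i) ((T.take i).drop (i - ℓ)))
    (Classical.decPred _) i

/-- `Xset T i = { j : 1 ≤ j ≤ i and j + LPF[j] − 1 ≥ i }`. -/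
def Xset (T : List α) (i : ℕ) : Set ℕ :=
  {j | 1 ≤ j ∧ j ≤ i ∧ i ≤ j + LPF T j - 1}

/-! ### Auxiliary lemmas -/

lemma occ_finite (T S : List α) : {p : ℕ | occursAt T S p}.Finite :=
  (Set.finite_Icc 1 (T.length + 1)).subset fun p hp =>
    Set.mem_Icc.2 ⟨hp.1, by have := hp.2.1; omega⟩

/-- Transfer of occurrences between `T` and `T.take i`. -/
lemma occ_take {T S : List α} {i p : ℕ} (hi : i ≤ T.length) (hp1 : 1 ≤ p)
    (hp : p + S.length ≤ i + 1) : occursAt (T.take i) S p ↔ occursAt T S p := by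
  have hmin : min S.length (i - (p - 1)) = S.length := by omega
  unfold occursAt
  rw [List.drop_take, List.take_take, hmin, List.length_take]
  constructor <;> rintro ⟨a, b, c⟩ <;> exact ⟨a, by omega, c⟩

/-- An occurrence of `S` yields an occurrence of any prefix of `S` at the same position. -/
lemma occ_prefix {T S : List α} {p : ℕ} (k : ℕ) (h : occursAt T S p) :
    occursAt T (S.take k) p := by
  obtain ⟨h1, h2, h3⟩ := h
  refine ⟨h1, ?_, ?_⟩
  · rw [List.length_take]; omega
  · rw [List.length_take]
    conv_rhs => rw [← h3]
    rw [List.take_take]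

/-- An occurrence of `S` yields an occurrence of `S.drop k` shifted by `k`. -/
lemma occ_drop {T S : List α} {p k : ℕ} (hk : k ≤ S.length) (h : occursAt T S p) :
    occursAt T (S.drop k) (p + k) := by
  obtain ⟨h1, h2, h3⟩ := h
  refine ⟨by omega, ?_, ?_⟩
  · rw [List.length_drop]; omega
  · have hT : T.drop (p + k - 1) = (T.drop (p - 1)).drop k := by
      rw [List.drop_drop]; congr 1; omega
    rw [List.length_drop, hT]
    conv_rhs => rw [← h3]
    rw [List.drop_take]

/-- `sub T j ℓ` has length `ℓ` and occurs at `j`, provided it fits inside `T`. -/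
lemma occ_self {T : List α} {j ℓ : ℕ} (h1 : 1 ≤ j) (h2 : j - 1 + ℓ ≤ T.length) :
    (sub T j ℓ).length = ℓ ∧ occursAt T (sub T j ℓ) j := by
  have hl : (sub T j ℓ).length = ℓ := by
    simp only [sub, List.length_take, List.length_drop]; omega
  exact ⟨hl, h1, by omega, by rw [hl]; rfl⟩

lemma fg_le {P : ℕ → Prop} (inst : DecidablePred P) (n : ℕ) :
    @Nat.findGreatest P inst n ≤ n := by
  letI := inst; exact Nat.findGreatest_le n

lemma le_fg {P : ℕ → Prop} (inst : DecidablePred P) {m n : ℕ} (h : m ≤ n) (hm : P m) :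
    m ≤ @Nat.findGreatest P inst n := by
  letI := inst; exact Nat.le_findGreatest h hm

lemma fg_spec {P : ℕ → Prop} (inst : DecidablePred P) {n : ℕ}
    (h : @Nat.findGreatest P inst n ≠ 0) : P (@Nat.findGreatest P inst n) := by
  letI := inst; exact (Nat.findGreatest_eq_iff.1 rfl).2.1 h

/-- The length-`ℓ` suffix of `T.take i` is `sub T (i-ℓ+1) ℓ`. -/
lemma suffix_eq (T : List α) {i ℓ : ℕ} (h : ℓ ≤ i) :
    (T.take i).drop (i - ℓ) = sub T (i - ℓ + 1) ℓ := by
  rw [List.drop_take]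
  unfold sub
  congr 1 <;> omega

/-- Characterization of the repeated-suffix predicate used in `LRS`. -/
lemma Q_iff (T : List α) {i ℓ : ℕ} (h1 : 1 ≤ ℓ) (hℓ : ℓ ≤ i) (h2 : i ≤ T.length) :
    2 ≤ occCount (T.take i) ((T.take i).drop (i - ℓ)) ↔
      ∃ p, 1 ≤ p ∧ p + ℓ ≤ i ∧ occursAt T (sub T (i - ℓ + 1) ℓ) p := by
  set j := i - ℓ + 1 with hjdef
  have hjle : j ≤ i := by omega
  have hfit : j - 1 + ℓ ≤ T.length := by omega
  obtain ⟨hlen, hoccj⟩ := occ_self (T := T) (j := j) (ℓ := ℓ) (by omega) hfit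
  have hs : (T.take i).drop (i - ℓ) = sub T j ℓ := suffix_eq T hℓ
  have hfin : {p : ℕ | occursAt (T.take i) (sub T j ℓ) p}.Finite := occ_finite _ _
  have hti : (T.take i).length = i := by rw [List.length_take]; omega
  rw [hs]
  unfold occCount
  constructor
  · intro h
    obtain ⟨a, ha, b, hb, hab⟩ := (Set.one_lt_ncard hfin).1 h
    have ha2 := ha.2.1; have hb2 := hb.2.1
    rw [hti, hlen] at ha2 hb2
    have ha1 := ha.1; have hb1 := hb.1
    -- both occurrences are ≤ j; the smaller one is < j
    rcases le_total a b with hle | hle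
    · refine ⟨a, ha1, by omega, ?_⟩
      exact (occ_take h2 ha1 (by rw [hlen]; omega)).1 ha
    · refine ⟨b, hb1, by omega, ?_⟩
      exact (occ_take h2 hb1 (by rw [hlen]; omega)).1 hb
  · rintro ⟨p, hp1, hpi, hocc⟩
    refine (Set.one_lt_ncard hfin).2 ⟨p, ?_, j, ?_, by omega⟩
    · exact (occ_take h2 hp1 (by rw [hlen]; omega)).2 hocc
    · exact (occ_take h2 (by omega) (by rw [hlen]; omega)).2 hoccj

/-- Downward closure of the repeated-suffix predicate. -/
lemma Q_mono (T : List α) {i ℓ ℓ' : ℕ} (h1 : 1 ≤ ℓ') (h12 : ℓ' ≤ ℓ) (hℓ : ℓ ≤ i)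
    (h2 : i ≤ T.length) (hQ : 2 ≤ occCount (T.take i) ((T.take i).drop (i - ℓ))) :
    2 ≤ occCount (T.take i) ((T.take i).drop (i - ℓ')) := by
  obtain ⟨p, hp1, hpi, hocc⟩ := (Q_iff T (by omega) hℓ h2).1 hQ
  have hlen : (sub T (i - ℓ + 1) ℓ).length = ℓ :=
    (occ_self (by omega) (by omega)).1
  have hdrop : (sub T (i - ℓ + 1) ℓ).drop (ℓ - ℓ') = sub T (i - ℓ' + 1) ℓ' := by
    unfold sub
    rw [List.drop_take, List.drop_drop]
    rw [show ℓ - (ℓ - ℓ') = ℓ' by omega, show i - ℓ + 1 - 1 + (ℓ - ℓ') = i - ℓ' + 1 - 1 by omega]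
  have hocc' := occ_drop (k := ℓ - ℓ') (by rw [hlen]; omega) hocc
  rw [hdrop] at hocc'
  exact (Q_iff T h1 (by omega) h2).2 ⟨p + (ℓ - ℓ'), by omega, by omega, hocc'⟩

/-- Membership in `Xset` is equivalent to the repeated-suffix predicate. -/
lemma mem_X_iff (T : List α) {i j : ℕ} (h1 : 1 ≤ j) (hj : j ≤ i) (h2 : i ≤ T.length) :
    j ∈ Xset T i ↔ 2 ≤ occCount (T.take i) ((T.take i).drop (i - (i - j + 1))) := by
  set ℓ := i - j + 1 with hℓdef
  have hji : i - ℓ + 1 = j := by omega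
  have hℓi : ℓ ≤ i := by omega
  rw [Q_iff T (by omega) hℓi h2, hji]
  constructor
  · rintro ⟨-, -, hX⟩
    have hL : ℓ ≤ LPF T j := by omega
    have hP : (j - 1) + LPF T j ≤ T.length ∧
        ∃ q, 1 ≤ q ∧ q < j ∧ occursAt T (sub T j (LPF T j)) q :=
      fg_spec (Classical.decPred _) (show LPF T j ≠ 0 by omega)
    obtain ⟨-, q, hq1, hqj, hqocc⟩ := hP
    have hsub : sub T j ℓ = (sub T j (LPF T j)).take ℓ := by
      unfold sub; rw [List.take_take, min_eq_left hL]
    refine ⟨q, hq1, by omega, ?_⟩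
    rw [hsub]
    exact occ_prefix ℓ hqocc
  · rintro ⟨p, hp1, hpi, hocc⟩
    have hPℓ : (j - 1) + ℓ ≤ T.length ∧ ∃ q, 1 ≤ q ∧ q < j ∧ occursAt T (sub T j ℓ) q :=
      ⟨by omega, p, hp1, by omega, hocc⟩
    have hL : ℓ ≤ LPF T j := le_fg (Classical.decPred _) (by omega) hPℓ
    exact ⟨h1, hj, by omega⟩

/-- if `X_i ≠ ∅` then `LRS[i] = i − min(X_i) + 1 = |X_i|`, and if `X_i = ∅`
then `LRS[i] = 0`; in particular `LRS[i] = |X_i|` for all `i`. -/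
theorem lrs_eq_xset_card (T : List α) (i : ℕ) (h1 : 1 ≤ i) (h2 : i ≤ T.length) :
    ((Xset T i).Nonempty →
      LRS T i = i - sInf (Xset T i) + 1 ∧ LRS T i = (Xset T i).ncard) ∧
    (Xset T i = ∅ → LRS T i = 0) ∧
    LRS T i = (Xset T i).ncard := by
  set L := LRS T i with hLdef
  have hLle : L ≤ i := fg_le (Classical.decPred _) i
  have hQle : ∀ ℓ, 1 ≤ ℓ → ℓ ≤ i →
      2 ≤ occCount (T.take i) ((T.take i).drop (i - ℓ)) → ℓ ≤ L := fun ℓ _ hℓ hQ =>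
    le_fg (Classical.decPred _) hℓ hQ
  have hLQ : L ≠ 0 → 2 ≤ occCount (T.take i) ((T.take i).drop (i - L)) := by
    intro h
    exact fg_spec (Classical.decPred _) h
  have hmem : ∀ j, j ∈ Xset T i ↔ (i - L + 1 ≤ j ∧ j ≤ i ∧ 1 ≤ L) := by
    intro j
    constructor
    · intro hj
      obtain ⟨hj1, hj2, -⟩ := id hj
      have hQ := (mem_X_iff T hj1 hj2 h2).1 hj
      have := hQle (i - j + 1) (by omega) (by omega) hQ
      exact ⟨by omega, hj2, by omega⟩
    · rintro ⟨ha, hb, hc⟩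
      have hj1 : 1 ≤ j := by omega
      have hQL := hLQ (by omega)
      have hQ := Q_mono T (ℓ := L) (ℓ' := i - j + 1) (by omega) (by omega) hLle h2 hQL
      exact (mem_X_iff T hj1 hb h2).2 hQ
  by_cases hL0 : L = 0
  · have hX : Xset T i = ∅ :=
      Set.eq_empty_iff_forall_notMem.2 fun j hj => by
        have := (hmem j).1 hj; omega
    refine ⟨fun hne => ?_, fun _ => hL0, ?_⟩
    · rw [hX] at hne; exact absurd hne (by simp)
    · rw [hX, Set.ncard_empty, hL0]
  · have hL1 : 1 ≤ L := by omega
    have hXeq : Xset T i = Set.Icc (i - L + 1) i := by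
      ext j
      rw [hmem j, Set.mem_Icc]
      constructor
      · rintro ⟨a, b, -⟩; exact ⟨a, b⟩
      · rintro ⟨a, b⟩; exact ⟨a, b, hL1⟩
    have hinf : sInf (Xset T i) = i - L + 1 := by
      rw [hXeq]; exact csInf_Icc (by omega)
    have hcard : (Xset T i).ncard = L := by
      rw [hXeq, ← Finset.coe_Icc, Set.ncard_coe_finset, Nat.card_Icc]
      omega
    refine ⟨fun _ => ⟨by rw [hinf]; omega, hcard.symm⟩, fun hemp => ?_, hcard.symm⟩
    · exfalso
      have : i ∈ Xset T i := by rw [hXeq]; exact Set.mem_Icc.2 ⟨by omega, le_refl i⟩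
      rw [hemp] at this
      exact this
end

section
/- Online factor-boundary test for LZ77 via LRS: let F_x = T[s..e] be a factor of the LZ77 factorization of a string T = T[1..n], starting at position s and ending at position e. Then for every position i with s < i ≤ n: i ≤ e if and only if i − LRS[i] + 1 ≤ s. -/
variable {α : Type*}

/-- `LZfactor T s ℓ`: the substring of length `ℓ` starting at the 1-based position `s`
is a valid LZ77 factor of `T`: either it is a single letter not occurring in
`T[1..s−1]` (i.e. `T[s]` occurs exactly once in `T[1..s]`), or it is the longest
prefix of `T[s..n]` that occurs at least twice in `T[1..s+ℓ−1]`. -/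
def LZfactor (T : List α) (s ℓ : ℕ) : Prop :=
  (ℓ = 1 ∧ occCount (T.take s) (sub T s 1) = 1) ∨
  (2 ≤ occCount (T.take (s + ℓ - 1)) (sub T s ℓ) ∧
    ∀ ℓ', ℓ < ℓ' → s + ℓ' ≤ T.length + 1 →
      occCount (T.take (s + ℓ' - 1)) (sub T s ℓ') < 2)

/-- `IsLZ77 T lens`: `lens` is the list of factor lengths of the LZ77 factorization
`T = F_1 ⋯ F_z`, where factor `F_x` starts at position `s_x = 1 + |F_1| + ⋯ + |F_{x-1}|`. -/
def IsLZ77 (T : List α) (lens : List ℕ) : Prop :=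
  (∀ ℓ ∈ lens, 1 ≤ ℓ) ∧ lens.sum = T.length ∧
  ∀ x, (hx : x < lens.length) → LZfactor T (1 + (lens.take x).sum) lens[x]

section Helpers

lemma two_le_occCount {T S : List α} {p q : ℕ} (hp : occursAt T S p) (hq : occursAt T S q)
    (hpq : p ≠ q) : 2 ≤ occCount T S := by
  exact (Set.one_lt_ncard (occ_finite T S)).2 ⟨p, hp, q, hq, hpq⟩

lemma occCount_two {T S : List α} (h : 2 ≤ occCount T S) :
    ∃ p q, occursAt T S p ∧ occursAt T S q ∧ p ≠ q := by
  have h1 : 1 < ({p : ℕ | occursAt T S p}).ncard := h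
  obtain ⟨p, hp, q, hq, hpq⟩ := (Set.one_lt_ncard (occ_finite T S)).1 h1
  exact ⟨p, q, hp, hq, hpq⟩

lemma take_drop_take (T : List α) {a b c : ℕ} (h : b + c ≤ a) :
    ((T.take a).drop b).take c = (T.drop b).take c := by
  rw [List.drop_take, List.take_take, min_eq_left (by omega)]

lemma occursAt_take_iff {T : List α} {a : ℕ} (ha : a ≤ T.length) (S : List α) (p : ℕ) :
    occursAt (T.take a) S p ↔
      1 ≤ p ∧ p + S.length ≤ a + 1 ∧ (T.drop (p - 1)).take S.length = S := by
  unfold occursAt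
  rw [List.length_take, min_eq_left ha]
  constructor
  · rintro ⟨h1, h2, h3⟩
    refine ⟨h1, h2, ?_⟩
    rw [← take_drop_take T (show (p - 1) + S.length ≤ a by omega)]
    exact h3
  · rintro ⟨h1, h2, h3⟩
    refine ⟨h1, h2, ?_⟩
    rw [take_drop_take T (show (p - 1) + S.length ≤ a by omega)]
    exact h3

lemma findGreatest_pos_spec (P : ℕ → Prop) (inst : DecidablePred P) {n : ℕ}
    (h : 0 < @Nat.findGreatest P inst n) : P (@Nat.findGreatest P inst n) := by
  obtain ⟨-, h2, -⟩ :=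
    (@Nat.findGreatest_eq_iff (@Nat.findGreatest P inst n) n P inst).1 rfl
  exact h2 (by omega)

lemma le_findGreatest' (P : ℕ → Prop) (inst : DecidablePred P) {m n : ℕ}
    (hmn : m ≤ n) (hP : P m) : m ≤ @Nat.findGreatest P inst n :=
  Nat.le_findGreatest hmn hP

lemma LRS_spec {T : List α} {i : ℕ} (h : 0 < LRS T i) :
    2 ≤ occCount (T.take i) ((T.take i).drop (i - LRS T i)) :=
  findGreatest_pos_spec
    (fun ℓ => 2 ≤ occCount (T.take i) ((T.take i).drop (i - ℓ)))
    (Classical.decPred _) h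

lemma findGreatest_le' (P : ℕ → Prop) (inst : DecidablePred P) (n : ℕ) :
    @Nat.findGreatest P inst n ≤ n :=
  Nat.findGreatest_le n

lemma LRS_le (T : List α) (i : ℕ) : LRS T i ≤ i :=
  findGreatest_le' _ (Classical.decPred _) i

end Helpers

/-- online factor-boundary test for LZ77 via LRS: if `F_x = T[s..e]` is a
factor of the LZ77 factorization of `T`, then for every position `i` with `s < i ≤ n`:
`i ≤ e` if and only if `i − LRS[i] + 1 ≤ s`. -/
theorem lz77_boundary_test (T : List α) (lens : List ℕ) (h : IsLZ77 T lens)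
    (x : ℕ) (hx : x < lens.length) (s e : ℕ)
    (hs : s = 1 + (lens.take x).sum) (he : e = s + lens[x] - 1) :
    ∀ i, s < i → i ≤ T.length → (i ≤ e ↔ i - LRS T i + 1 ≤ s) := by
  obtain ⟨hpos, hsum, hfac⟩ := h
  have hℓ1 : 1 ≤ lens[x] := hpos _ (List.getElem_mem hx)
  set ℓ := lens[x] with hℓdef
  have hsℓ : s + ℓ ≤ T.length + 1 := by
    have h1 : (lens.take (x + 1)).sum = (lens.take x).sum + ℓ := List.sum_take_succ lens x hx
    have h2 : (lens.take (x + 1)).sum ≤ lens.sum := by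
      conv_rhs => rw [← List.take_append_drop (x + 1) lens]
      rw [List.sum_append]
      omega
    omega
  have hfx : LZfactor T s ℓ := hs ▸ hfac x hx
  intro i his hin
  have hs1 : 1 ≤ s := by omega
  constructor
  · -- forward: i ≤ e → i - LRS T i + 1 ≤ s
    intro hie
    have hmℓ : i - s + 1 ≤ ℓ := by omega
    rcases hfx with ⟨hl1, _⟩ | ⟨hocc, _⟩
    · omega
    · set m := i - s + 1 with hmdef
      obtain ⟨p, q, hp, hq, hpq⟩ := occCount_two hocc
      have hFlen : (sub T s ℓ).length = ℓ := by
        unfold sub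
        rw [List.length_take, List.length_drop]
        omega
      rw [occursAt_take_iff (by omega) _ _] at hp hq
      rw [hFlen] at hp hq
      -- the target suffix
      have hS' : (T.take i).drop (i - m) = (T.drop (s - 1)).take m := by
        have e1 : i - m = s - 1 := by omega
        have e2 : i - (i - m) = m := by omega
        rw [List.drop_take, e2, e1]
      have hS'len : ((T.take i).drop (i - m)).length = m := by
        rw [hS', List.length_take, List.length_drop]
        omega
      have key : ∀ r : ℕ, 1 ≤ r → r + ℓ ≤ s + ℓ - 1 + 1 →
          (T.drop (r - 1)).take ℓ = sub T s ℓ →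
          occursAt (T.take i) ((T.take i).drop (i - m)) r := by
        intro r hr1 hr2 hr3
        rw [occursAt_take_iff hin, hS'len]
        refine ⟨hr1, by omega, ?_⟩
        have := congrArg (List.take m) hr3
        rw [List.take_take, min_eq_left (by omega)] at this
        rw [hS', this]
        unfold sub
        rw [List.take_take, min_eq_left (by omega)]
      have hLRS : m ≤ LRS T i := by
        apply le_findGreatest'
          (fun ℓ => 2 ≤ occCount (T.take i) ((T.take i).drop (i - ℓ)))
          (Classical.decPred _) (by omega)
        exact two_le_occCount (key p hp.1 hp.2.1 hp.2.2) (key q hq.1 hq.2.1 hq.2.2) hpq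
      omega
  · -- backward (contrapositive): e < i → s < i - LRS T i + 1
    intro hle
    by_contra hie
    push_neg at hie
    set L := LRS T i with hLdef
    have hLle : L ≤ i := LRS_le T i
    have hLm : i - s + 1 ≤ L := by omega
    set m := i - s + 1 with hmdef
    have hm2 : 2 ≤ m := by omega
    have hPL := LRS_spec (show 0 < L by omega)
    obtain ⟨p, q, hp, hq, hpq⟩ := occCount_two hPL
    have hSL : (T.take i).drop (i - L) = (T.drop (i - L)).take L := by
      have e1 : i - (i - L) = L := by omega
      rw [List.drop_take, e1]
    have hSLlen : ((T.take i).drop (i - L)).length = L := by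
      rw [List.length_drop, List.length_take]
      omega
    rw [occursAt_take_iff hin, hSLlen] at hp hq
    set d := L - m with hddef
    -- occurrences of sub T s m at p + d and q + d in T.take i
    have hsublen : (sub T s m).length = m := by
      unfold sub
      rw [List.length_take, List.length_drop]
      omega
    have key : ∀ r : ℕ, 1 ≤ r → r + L ≤ i + 1 →
        (T.drop (r - 1)).take L = (T.take i).drop (i - L) →
        occursAt (T.take i) (sub T s m) (r + d) := by
      intro r hr1 hr2 hr3
      rw [occursAt_take_iff hin, hsublen]
      refine ⟨by omega, by omega, ?_⟩
      have e1 : r + d - 1 = (r - 1) + d := by omega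
      have e2 : (i - L) + ((i - L) + d - (i - L)) + 0 = s - 1 := by omega
      have h4 : (T.drop (r + d - 1)).take m = (((T.drop (r - 1)).take L).drop d).take m := by
        rw [List.drop_take, List.take_take, min_eq_left (by omega), List.drop_drop, e1]
      rw [h4, hr3, hSL, List.drop_take, List.take_take, min_eq_left (by omega),
        List.drop_drop]
      unfold sub
      rw [show (i - L) + d = s - 1 by omega]
    have hocc2 : 2 ≤ occCount (T.take i) (sub T s m) :=
      two_le_occCount (key p hp.1 hp.2.1 hp.2.2) (key q hq.1 hq.2.1 hq.2.2)
        (by omega)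
    rcases hfx with ⟨hl1, hone⟩ | ⟨_, hmax⟩
    · -- single-letter factor: T[s] occurs once in T[1..s], contradiction
      have hsn : s ≤ T.length := by omega
      have hsub1len : (sub T s 1).length = 1 := by
        unfold sub
        rw [List.length_take, List.length_drop]
        omega
      have key1 : ∀ r : ℕ, occursAt (T.take i) (sub T s m) r →
          occursAt (T.take s) (sub T s 1) r := by
        intro r hr
        rw [occursAt_take_iff hin, hsublen] at hr
        rw [occursAt_take_iff hsn, hsub1len]
        refine ⟨hr.1, by omega, ?_⟩
        have := congrArg (List.take 1) hr.2.2
        rw [List.take_take, min_eq_left (by omega)] at this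
        rw [this]
        unfold sub
        rw [List.take_take, min_eq_left (by omega)]
      have := two_le_occCount (key1 _ (key p hp.1 hp.2.1 hp.2.2))
        (key1 _ (key q hq.1 hq.2.1 hq.2.2)) (by omega)
      omega
    · -- maximality of the factor contradicts the long repeat
      have := hmax m (by omega) (by omega)
      have heq : s + m - 1 = i := by omega
      rw [heq] at this
      omega
end
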